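/- For all real numbers P ≥ 0 and S ≥ 0 there exists α ∈ [0, 1] such that (1/2)·log₂(1+P/2) + (1/2)·log₂(1 + αP/(2 + (1−α)P + 2S)) + (1/4)·log₂(1 + (1−α)P/2) ≥ R_in(P,S). -/

import Mathlib

open Real

/-- The piecewise closed-form inner-bound expression of Lemma 4 (in bits),
with `S = Q·sin²Δ` the effective interference power. -/
noncomputable def Rin (P S : ℝ) : ℝ :=
  if S ≤ 1 then (1 / 2) * logb 2 (1 + P / 2) + (1 / 2) * logb 2 (1 + P / (2 + 2 * S))
  else if P + 1 ≤ S then (3 / 4) * logb 2 (1 + P / 2) - 1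
  else (1 / 2) * logb 2 (1 + P / 2) + (1 / 2) * logb 2 (1 / 2 + (P + 2) / (2 * S))
      + (1 / 4) * logb 2 S - 5 / 4

private lemma logb_le_one_add {x y : ℝ} (hx : 0 < x) (hy : 0 < y) (h : x ≤ 2 * y) :
    logb 2 x ≤ 1 + logb 2 y := by
  have h2 : logb 2 x ≤ logb 2 (2 * y) :=
    Real.logb_le_logb_of_le one_lt_two hx h
  rwa [Real.logb_mul (by norm_num) (ne_of_gt hy), Real.logb_self_eq_one one_lt_two] at h2

/-- Lemma 4: the achievable rate with `β = 1/2`, optimized over `α ∈ [0,1]`,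
dominates the closed-form piecewise expression `Rin`. -/
theorem stmt_2 (P S : ℝ) (hP : 0 ≤ P) (hS : 0 ≤ S) :
    ∃ α ∈ Set.Icc (0 : ℝ) 1,
      Rin P S ≤ (1 / 2) * logb 2 (1 + P / 2)
        + (1 / 2) * logb 2 (1 + α * P / (2 + (1 - α) * P + 2 * S))
        + (1 / 4) * logb 2 (1 + (1 - α) * P / 2) := by
  by_cases hS1 : S ≤ 1
  · refine ⟨1, by norm_num, ?_⟩
    rw [Rin, if_pos hS1]
    norm_num
  · by_cases hPS : P + 1 ≤ S
    · refine ⟨0, by norm_num, ?_⟩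
      rw [Rin, if_neg hS1, if_pos hPS]
      have h1 : (0:ℝ) ≤ logb 2 (1 + 0 * P / (2 + (1 - 0) * P + 2 * S)) := by
        norm_num
      have h2 : logb 2 (1 + (1 - 0) * P / 2) = logb 2 (1 + P / 2) := by norm_num
      rw [h2]
      nlinarith [h1]
    · -- 1 < S < P + 1
      push_neg at hS1 hPS
      have hS1' : 1 < S := hS1
      have hP0 : 0 < P := by linarith
      refine ⟨1 - (S - 1) / P, ⟨?_, ?_⟩, ?_⟩
      · rw [sub_nonneg, div_le_one hP0]; linarith
      · have : 0 ≤ (S - 1) / P := div_nonneg (by linarith) hP0.le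
        linarith
      · rw [Rin, if_neg (not_le.mpr hS1), if_neg (not_le.mpr hPS)]
        set α : ℝ := 1 - (S - 1) / P with hα
        have hαP : α * P = P + 1 - S := by
          rw [hα, sub_mul, div_mul_cancel₀ _ hP0.ne']; ring
        have h1αP : (1 - α) * P = S - 1 := by
          rw [hα, sub_sub_cancel, div_mul_cancel₀ _ hP0.ne']
        have hSpos : 0 < S := by linarith
        -- rewrite the three logs
        have e1 : (1:ℝ) / 2 + (P + 2) / (2 * S) = (S + P + 2) / (2 * S) := by
          field_simp; ring
        have e2 : 1 + α * P / (2 + (1 - α) * P + 2 * S) = (2 * S + P + 2) / (3 * S + 1) := by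
          rw [hαP, h1αP]
          have : (2 + (S - 1) + 2 * S) = 3 * S + 1 := by ring
          rw [this]
          field_simp
          ring
        have e3 : 1 + (1 - α) * P / 2 = (S + 1) / 2 := by
          rw [h1αP]; ring
        rw [e1, e2, e3]
        have hApos : 0 < (S + P + 2) / (2 * S) := by positivity
        have hBpos : 0 < (2 * S + P + 2) / (3 * S + 1) := by positivity
        have hCpos : 0 < (S + 1) / 2 := by positivity
        have hAB : (S + P + 2) / (2 * S) ≤ 2 * ((2 * S + P + 2) / (3 * S + 1)) := by
          have h4 : 2 * ((2 * S + P + 2) / (3 * S + 1)) = (2 * (2 * S + P + 2)) / (3 * S + 1) := by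
            ring
          rw [h4, div_le_div_iff₀ (by positivity) (by linarith)]
          nlinarith
        have hSC : S ≤ 2 * ((S + 1) / 2) := by linarith
        have i1 : logb 2 ((S + P + 2) / (2 * S)) ≤ 1 + logb 2 ((2 * S + P + 2) / (3 * S + 1)) :=
          logb_le_one_add hApos hBpos hAB
        have i2 : logb 2 S ≤ 1 + logb 2 ((S + 1) / 2) :=
          logb_le_one_add hSpos hCpos hSC
        nlinarith [i1, i2]
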